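/- If p is even and q is odd, and β ∈ W_q is a b*-cocycle, then ⟨b*(γ), β⟩ = 0 for every cochain γ ∈ Hom_k(k[G]^{⊗p}, k); hence the pairing is well defined on cohomology classes in this case. -/

import Mathlib

/-- Hochschild cochains `W_n = Hom_k(k[G]^{⊗(n+1)}, k)`, identified with functions on
basis tuples of group elements. -/
abbrev W (k G : Type) (n : ℕ) : Type := (Fin (n + 1) → G) → k

/-- The `i`-th Hochschild face map on tuples: for `i ≤ n` it multiplies adjacent entries
`a_i a_{i+1}`, and for `i = n+1` it forms `(a_{n+1} a_0, a_1, …, a_n)`. -/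
def hface (G : Type) [Group G] (n : ℕ) (i : Fin (n + 2)) (σ : Fin (n + 2) → G) :
    Fin (n + 1) → G := fun j =>
  if (i : ℕ) = n + 1 then
    if (j : ℕ) = 0 then σ (Fin.last (n + 1)) * σ 0 else σ j.castSucc
  else
    if (j : ℕ) < (i : ℕ) then σ j.castSucc
    else if (j : ℕ) = (i : ℕ) then σ j.castSucc * σ j.succ
    else σ j.succ

/-- The Hochschild coboundary `b* : W_n → W_{n+1}`, dual to the Hochschild boundary `b`. -/
def cbW (k G : Type) [CommRing k] [Group G] (n : ℕ) (α : W k G n) : W k G (n + 1) :=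
  fun σ => ∑ i : Fin (n + 2), (-1 : k) ^ (i : ℕ) * α (hface G n i σ)

/-- Evaluation `α(h, N, …, N)` of a cochain with the norm element `N = Σ_{g ∈ G} g` in
every slot after the first: by multilinearity this is the sum over all tuples. -/
def normEval (k G : Type) [CommRing k] [Group G] [Fintype G] (p : ℕ)
    (α : W k G p) (h : G) : k :=
  ∑ τ : Fin p → G, α (Fin.cases (motive := fun _ => G) h τ)

/-- The pairing `⟨α, β⟩ = Σ_{h ∈ G} α(h, N, …, N) β(h⁻¹, N, …, N)`. -/
def pairW (k G : Type) [CommRing k] [Group G] [Fintype G] {p q : ℕ}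
    (α : W k G p) (β : W k G q) : k :=
  ∑ h : G, normEval k G p α h * normEval k G q β h⁻¹

section Aux

variable {G : Type} [Group G] [Fintype G] {M : Type} [AddCommMonoid M]

lemma sum_pi_cons (n : ℕ) (f : (Fin (n + 1) → G) → M) :
    ∑ τ : Fin (n + 1) → G, f τ = ∑ g : G, ∑ τ : Fin n → G, f (Fin.cons g τ) := by
  rw [← (Fin.consEquiv (fun _ : Fin (n + 1) => G)).sum_comp f, Fintype.sum_prod_type]
  rfl

lemma sum_pi_snoc (n : ℕ) (f : (Fin (n + 1) → G) → M) :
    ∑ τ : Fin (n + 1) → G, f τ = ∑ g : G, ∑ τ : Fin n → G, f (Fin.snoc τ g) := by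
  rw [← (Fin.snocEquiv (fun _ : Fin (n + 1) => G)).sum_comp f, Fintype.sum_prod_type]
  rfl

lemma sum_pi_removeNth (n : ℕ) (p : Fin (n + 1)) (f : (Fin n → G) → M) :
    ∑ τ : Fin (n + 1) → G, f (τ ∘ p.succAbove)
      = (Fintype.card G) • ∑ μ : Fin n → G, f μ := by
  rw [← (Fin.insertNthEquiv (fun _ : Fin (n + 1) => G) p).sum_comp
      (fun τ => f (τ ∘ p.succAbove)), Fintype.sum_prod_type]
  have key : ∀ (g : G) (μ : Fin n → G),
      ((Fin.insertNthEquiv (fun _ : Fin (n + 1) => G) p) (g, μ)) ∘ p.succAbove = μ := by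
    intro g μ
    funext j
    simp [Fin.insertNthEquiv, Fin.insertNth_apply_succAbove]
  simp only [key]
  rw [Finset.sum_const, Finset.card_univ]

lemma sum_update_inner (n c : ℕ) (hc : c < n) (f : (Fin (n + 1) → G) → M) :
    ∑ τ : Fin (n + 1) → G,
        f (Function.update τ ⟨c + 1, by omega⟩
          ((τ ⟨c, by omega⟩)⁻¹ * τ ⟨c + 1, by omega⟩))
      = ∑ τ : Fin (n + 1) → G, f τ := by
  set p : Fin (n + 1) := ⟨c, by omega⟩ with hp
  set q : Fin (n + 1) := ⟨c + 1, by omega⟩ with hq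
  have hpq : p ≠ q := by simp [hp, hq, Fin.ext_iff]
  set Ψ : (Fin (n + 1) → G) → (Fin (n + 1) → G) :=
    fun τ => Function.update τ q ((τ p)⁻¹ * τ q) with hΨ
  set Φ : (Fin (n + 1) → G) → (Fin (n + 1) → G) :=
    fun σ => Function.update σ q (σ p * σ q) with hΦ
  have hbij : Function.Bijective Ψ := by
    rw [Function.bijective_iff_has_inverse]
    refine ⟨Φ, fun τ => ?_, fun σ => ?_⟩
    · funext j
      by_cases hj : j = q
      · subst hj
        simp [hΦ, hΨ, Function.update_self, Function.update_of_ne hpq]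
      · simp [hΦ, hΨ, Function.update_of_ne hj]
    · funext j
      by_cases hj : j = q
      · subst hj
        simp [hΦ, hΨ, Function.update_self, Function.update_of_ne hpq]
      · simp [hΦ, hΨ, Function.update_of_ne hj]
  exact Fintype.sum_bijective Ψ hbij _ f (fun τ => rfl)

lemma hface_zero (n : ℕ) (h g : G) (τ : Fin n → G) :
    hface G n 0 (Fin.cons h (Fin.cons g τ)) = Fin.cons (h * g) τ := by
  funext j
  refine Fin.cases ?_ (fun j' => ?_) j
  · simp [hface]
  · simp [hface, Fin.succ_ne_zero]

lemma hface_last (n : ℕ) (h g : G) (τ : Fin n → G) :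
    hface G n (Fin.last (n + 1)) (Fin.cons h (Fin.snoc τ g)) = Fin.cons (g * h) τ := by
  funext j
  refine Fin.cases ?_ (fun j' => ?_) j
  · simp only [hface, Fin.val_last, Fin.val_zero, if_true, eq_self_iff_true]
    rw [show (Fin.last (n + 1)) = (Fin.last n).succ from rfl, Fin.cons_succ,
      Fin.snoc_last, Fin.cons_zero, Fin.cons_zero]
  · simp only [hface, Fin.val_last, Fin.val_succ, if_true, eq_self_iff_true,
      Nat.succ_ne_zero, if_false]
    rw [show (j'.succ.castSucc : Fin (n + 2)) = (j'.castSucc).succ from rfl,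
      Fin.cons_succ, Fin.snoc_castSucc, Fin.cons_succ]

lemma hface_inner (n c : ℕ) (hc : c < n) (h : G) (τ : Fin (n + 1) → G) :
    hface G n ⟨c + 1, by omega⟩ (Fin.cons h
      (Function.update τ ⟨c + 1, by omega⟩ ((τ ⟨c, by omega⟩)⁻¹ * τ ⟨c + 1, by omega⟩)))
    = Fin.cons h (τ ∘ (Fin.succAbove ⟨c, by omega⟩)) := by
  set p : Fin (n + 1) := ⟨c, by omega⟩ with hp
  set q : Fin (n + 1) := ⟨c + 1, by omega⟩ with hq
  set Ψ : Fin (n + 1) → G := Function.update τ q ((τ p)⁻¹ * τ q) with hΨ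
  have hΨp : Ψ p = τ p := Function.update_of_ne (by simp [hp, hq, Fin.ext_iff]) _ _
  have hΨq : Ψ q = (τ p)⁻¹ * τ q := Function.update_self _ _ _
  have hΨo : ∀ j : Fin (n + 1), (j : ℕ) ≠ c + 1 → Ψ j = τ j := fun j hj =>
    Function.update_of_ne (by simp [hq, Fin.ext_iff, hj]) _ _
  funext j
  refine Fin.cases ?_ (fun j' => ?_) j
  · simp only [hface, Fin.cons_zero, Fin.val_zero]
    rw [if_neg (by omega)]
    simp only [show (0:ℕ) < c + 1 by omega, ↓reduceIte, Fin.castSucc_zero, Fin.cons_zero]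
  · simp only [hface, Fin.cons_succ, Fin.val_succ]
    rw [if_neg (by omega)]
    rcases lt_trichotomy (j' : ℕ) c with hlt | heq | hgt
    · rw [if_pos (by omega)]
      rw [show (j'.succ.castSucc : Fin (n + 2)) = (j'.castSucc).succ from rfl, Fin.cons_succ,
        hΨo j'.castSucc (by simp [Fin.val_succ]; omega), Function.comp,
        Fin.succAbove_of_castSucc_lt _ _
          (by rw [Fin.lt_def]; simpa using (by omega : (j' : ℕ) < c))]
    · rw [if_neg (by omega), if_pos (by omega)]
      have h1 : (j'.castSucc : Fin (n + 1)) = p := by simp [hp, Fin.ext_iff, heq]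
      have h2 : (j'.succ : Fin (n + 1)) = q := by simp [hq, Fin.ext_iff, heq]
      rw [show (j'.succ.castSucc : Fin (n + 2)) = (j'.castSucc).succ from rfl, Fin.cons_succ,
        h1, h2, hΨp, hΨq, Function.comp,
        Fin.succAbove_of_le_castSucc _ _
          (by rw [Fin.le_def]; simpa using (by omega : c ≤ (j' : ℕ))),
        h2]
      group
    · rw [if_neg (by omega), if_neg (by omega)]
      rw [hΨo j'.succ (by simp [Fin.val_succ]; omega), Function.comp,
        Fin.succAbove_of_le_castSucc _ _
          (by rw [Fin.le_def]; simpa using (by omega : c ≤ (j' : ℕ)))]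

end Aux

section Key

variable {k G : Type} [CommRing k] [Group G] [Fintype G]

lemma normEval_cbW_odd' (n : ℕ) (hodd : Odd n) (α : W k G n) (h : G) :
    normEval k G (n + 1) (cbW k G n α) h
      = 2 * (∑ σ : Fin (n + 1) → G, α σ)
        - (Fintype.card G : k) * normEval k G n α h := by
  classical
  obtain ⟨l, hn⟩ := hodd
  set ν : k := (Fintype.card G : k) with hν
  set S : k := ∑ σ : Fin (n + 1) → G, α σ with hS
  set E : k := normEval k G n α h with hE
  set T : Fin (n + 2) → k :=
    fun i => ∑ τ : Fin (n + 1) → G, α (hface G n i (Fin.cons h τ)) with hT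
  have hcc : ∀ τ : Fin (n + 1) → G,
      (Fin.cases (motive := fun _ => G) h τ : Fin (n + 2) → G) = Fin.cons h τ := fun _ => rfl
  have step1 : normEval k G (n + 1) (cbW k G n α) h
      = ∑ i : Fin (n + 2), (-1 : k) ^ (i : ℕ) * T i := by
    simp only [normEval, cbW, hcc]
    rw [Finset.sum_comm]
    simp only [hT, Finset.mul_sum]
  have hT0 : T 0 = S := by
    rw [hT]
    simp only
    rw [sum_pi_cons n (fun τ => α (hface G n 0 (Fin.cons h τ)))]
    simp only [hface_zero]
    rw [hS, sum_pi_cons n (fun σ => α σ)]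
    exact Fintype.sum_equiv (Equiv.mulLeft h) _ _ (fun g => rfl)
  have hTlast : T (Fin.last (n + 1)) = S := by
    rw [hT]
    simp only
    rw [sum_pi_snoc n (fun τ => α (hface G n (Fin.last (n + 1)) (Fin.cons h τ)))]
    simp only [hface_last]
    rw [hS, sum_pi_cons n (fun σ => α σ)]
    exact Fintype.sum_equiv (Equiv.mulRight h) _ _ (fun g => rfl)
  have hTinner : ∀ i : Fin (n + 2), (i : ℕ) ≠ 0 → (i : ℕ) ≠ n + 1 → T i = ν * E := by
    intro i h0 hn1
    obtain ⟨c, hc, hic⟩ : ∃ c, c < n ∧ (i : ℕ) = c + 1 :=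
      ⟨(i : ℕ) - 1, by omega, by omega⟩
    have hi : i = ⟨c + 1, by omega⟩ := Fin.ext hic
    rw [hT]
    simp only
    rw [hi, ← sum_update_inner n c hc
      (fun τ => α (hface G n ⟨c + 1, by omega⟩ (Fin.cons h τ)))]
    simp only [hface_inner n c hc h]
    rw [sum_pi_removeNth n ⟨c, by omega⟩ (fun μ => α (Fin.cons h μ))]
    rw [hE, hν, normEval, nsmul_eq_mul]
    rfl
  have hsplit : ∀ i : Fin (n + 2), (-1 : k) ^ (i : ℕ) * T i
      = (-1 : k) ^ (i : ℕ) * (T i - ν * E) + (-1 : k) ^ (i : ℕ) * (ν * E) := by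
    intro i; ring
  rw [step1, Finset.sum_congr rfl (fun i _ => hsplit i), Finset.sum_add_distrib,
    ← Finset.sum_mul]
  have hgeom : ∑ i : Fin (n + 2), (-1 : k) ^ (i : ℕ) = 1 := by
    rw [Fin.sum_univ_eq_sum_range (fun i => (-1 : k) ^ i) (n + 2), neg_one_geom_sum,
      if_neg (by rw [hn]; exact (Nat.not_even_iff_odd).mpr ⟨l + 1, by ring⟩)]
  have hzero : ∀ i ∈ (Finset.univ : Finset (Fin (n + 2))),
      i ∉ ({0, Fin.last (n + 1)} : Finset (Fin (n + 2))) →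
      (-1 : k) ^ (i : ℕ) * (T i - ν * E) = 0 := by
    intro i _ hi
    simp only [Finset.mem_insert, Finset.mem_singleton, not_or] at hi
    rw [hTinner i (fun h0 => hi.1 (Fin.ext (by simpa using h0)))
      (fun h1 => hi.2 (Fin.ext (by simpa using h1)))]
    ring
  have hpairs : ∑ i : Fin (n + 2), (-1 : k) ^ (i : ℕ) * (T i - ν * E)
      = 2 * (S - ν * E) := by
    rw [← Finset.sum_subset (Finset.subset_univ ({0, Fin.last (n + 1)} :
      Finset (Fin (n + 2)))) hzero]
    rw [Finset.sum_pair (by simp [Fin.ext_iff] : (0 : Fin (n + 2)) ≠ Fin.last (n + 1))]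
    rw [hT0, hTlast]
    have hv0 : ((0 : Fin (n + 2)) : ℕ) = 0 := rfl
    have hvl : ((Fin.last (n + 1) : Fin (n + 2)) : ℕ) = n + 1 := rfl
    rw [hv0, hvl, pow_zero,
      show (-1 : k) ^ (n + 1) = 1 from Even.neg_one_pow ⟨l + 1, by omega⟩]
    ring
  rw [hpairs, hgeom]
  ring

lemma cocycle_rel (m' : ℕ) (β : W k G (2 * m' + 1))
    (hβ : cbW k G (2 * m' + 1) β = 0) (h : G) :
    (Fintype.card G : k) * normEval k G (2 * m' + 1) β h
      = 2 * (∑ σ : Fin (2 * m' + 1 + 1) → G, β σ) := by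
  have hkey := normEval_cbW_odd' (2 * m' + 1) ⟨m', by ring⟩ β h
  rw [hβ] at hkey
  have h0 : normEval k G (2 * m' + 1 + 1) (0 : W k G (2 * m' + 1 + 1)) h = 0 := by
    simp [normEval]
  rw [h0] at hkey
  linear_combination hkey

end Key

/-- For `p = 2m+2` even and `q = 2m'+1` odd, if `β ∈ W_q` is a `b*`-cocycle then
`⟨b*(γ), β⟩ = 0` for every cochain `γ ∈ Hom_k(k[G]^{⊗p}, k) = W_{p-1}`; hence the
pairing is well defined on cohomology classes in this case. -/
theorem pairW_descends_even_odd (k G : Type) [Field k] [Group G] [Fintype G] (m m' : ℕ)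
    (β : W k G (2 * m' + 1)) (hβ : cbW k G (2 * m' + 1) β = 0)
    (γ : W k G (2 * m + 1)) :
    pairW k G (cbW k G (2 * m + 1) γ) β = 0 := by
  classical
  set Sγ : k := ∑ σ : Fin (2 * m + 1 + 1) → G, γ σ with hSγ
  set Sβ : k := ∑ σ : Fin (2 * m' + 1 + 1) → G, β σ with hSβ
  have e1 : ∀ h : G,
      normEval k G (2 * m + 1 + 1) (cbW k G (2 * m + 1) γ) h
        * normEval k G (2 * m' + 1) β h⁻¹
      = 2 * Sγ * normEval k G (2 * m' + 1) β h⁻¹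
        - normEval k G (2 * m + 1) γ h * (2 * Sβ) := by
    intro h
    rw [normEval_cbW_odd' (2 * m + 1) ⟨m, by ring⟩ γ h]
    have h2 := cocycle_rel m' β hβ h⁻¹
    rw [← hSβ] at h2
    rw [← hSγ]
    linear_combination (-(normEval k G (2 * m + 1) γ h)) * h2
  rw [pairW, Finset.sum_congr rfl (fun h _ => e1 h), Finset.sum_sub_distrib,
    ← Finset.mul_sum, ← Finset.sum_mul]
  have hβsum : ∑ h : G, normEval k G (2 * m' + 1) β h⁻¹ = Sβ := by
    have e := Fintype.sum_equiv (Equiv.inv G)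
      (fun h : G => normEval k G (2 * m' + 1) β h⁻¹)
      (fun h : G => normEval k G (2 * m' + 1) β h) (fun h => rfl)
    rw [e]
    have : ∀ h : G, normEval k G (2 * m' + 1) β h
        = ∑ τ : Fin (2 * m' + 1) → G, β (Fin.cons h τ) := fun _ => rfl
    simp only [this]
    rw [hSβ, sum_pi_cons (2 * m' + 1) β]
  have hγsum : ∑ h : G, normEval k G (2 * m + 1) γ h = Sγ := by
    have : ∀ h : G, normEval k G (2 * m + 1) γ h
        = ∑ τ : Fin (2 * m + 1) → G, γ (Fin.cons h τ) := fun _ => rfl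
    simp only [this]
    rw [hSγ, sum_pi_cons (2 * m + 1) γ]
  rw [hβsum, hγsum]
  ring
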